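/- Define the affine lowering operator f₀ on A ∈ B^{i,m} by decreasing a_{1,n} by 1 (defined when a_{1,n} > 0), and the raising operator e₀ by increasing a_{1,n} by 1 (defined when ε₀(A) = m - Σ_{j=i}^{n} a_{1,j} - Σ_{j=2}^{n} a_{j,n} > 0). Then f₀ and e₀ map B^{i,m} to B^{i,m} (i.e., all lattice-path inequalities are preserved), and they are mutually inverse wherever defined. -/

import Mathlib

open Finset

/-- Matrices of the polytope model: entry `a p q` for row `p`, column `q`. -/
abbrev Mat := ℕ → ℕ → ℕ

/-- A monotone lattice path `β(1) = (1,i), …, β(n) = (i,n)`: each step increases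
the row or the column index by 1. -/
def IsPath (n i : ℕ) (β : ℕ → ℕ × ℕ) : Prop :=
  β 1 = (1, i) ∧ β n = (i, n) ∧
    ∀ s, 1 ≤ s → s < n →
      β (s + 1) = ((β s).1 + 1, (β s).2) ∨ β (s + 1) = ((β s).1, (β s).2 + 1)

/-- Membership in the Kirillov–Reshetikhin polytope `B^{i,m}` of type `A_n^{(1)}`:
non-negative integer matrices indexed by `1 ≤ p ≤ i`, `i ≤ q ≤ n` (zero outside),
all of whose monotone lattice-path sums are at most `m`. -/
def MemKR (n i m : ℕ) (a : Mat) : Prop :=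
  (∀ p q, ¬(1 ≤ p ∧ p ≤ i ∧ i ≤ q ∧ q ≤ n) → a p q = 0) ∧
  ∀ β : ℕ → ℕ × ℕ, IsPath n i β → ∑ s ∈ Icc 1 n, a (β s).1 (β s).2 ≤ m

/-- The set of maximizers of `F` on `S`. -/
def maximizers (S : Finset ℕ) (F : ℕ → ℕ) : Finset ℕ :=
  S.filter fun q => ∀ q' ∈ S, F q' ≤ F q

/-- Smallest maximizer. -/
def argmaxLow (S : Finset ℕ) (F : ℕ → ℕ) : ℕ := WithTop.untopD 0 (maximizers S F).min

/-- Largest maximizer. -/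
def argmaxHigh (S : Finset ℕ) (F : ℕ → ℕ) : ℕ := WithBot.unbotD 0 (maximizers S F).max

/-- For `l > i`: `G(q) = Σ_{j=1}^q a_{j,l-1} + Σ_{j=q}^i a_{j,l}`. -/
def Gplus (i : ℕ) (a : Mat) (l q : ℕ) : ℕ :=
  ∑ j ∈ Icc 1 q, a j (l - 1) + ∑ j ∈ Icc q i, a j l

/-- For `l < i`: `F(q) = Σ_{j=i}^q a_{l,j} + Σ_{j=q}^n a_{l+1,j}`. -/
def Fminus (n i : ℕ) (a : Mat) (l q : ℕ) : ℕ :=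
  ∑ j ∈ Icc i q, a l j + ∑ j ∈ Icc q n, a (l + 1) j

def pPlus (i : ℕ) (a : Mat) (l : ℕ) : ℕ := argmaxLow (Icc 1 i) (Gplus i a l)
def qPlus (i : ℕ) (a : Mat) (l : ℕ) : ℕ := argmaxHigh (Icc 1 i) (Gplus i a l)
def pMinus (n i : ℕ) (a : Mat) (l : ℕ) : ℕ := argmaxHigh (Icc i n) (Fminus n i a l)
def qMinus (n i : ℕ) (a : Mat) (l : ℕ) : ℕ := argmaxLow (Icc i n) (Fminus n i a l)

/-- The statistic `φ_l` of the polytope model (`l = 0` is the affine one). -/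
def phi (n i m : ℕ) (a : Mat) (l : ℕ) : ℤ :=
  if l = 0 then (a 1 n : ℤ)
  else if l = i then
    (m : ℤ) - ∑ j ∈ Icc 1 (i - 1), (a j i : ℤ) - ∑ j ∈ Icc i n, (a i j : ℤ)
  else if i < l then
    ∑ j ∈ Icc 1 (pPlus i a l), (a j (l - 1) : ℤ)
      - ∑ j ∈ Icc 1 (pPlus i a l - 1), (a j l : ℤ)
  else
    ∑ j ∈ Icc (pMinus n i a l) n, (a (l + 1) j : ℤ)
      - ∑ j ∈ Icc (pMinus n i a l + 1) n, (a l j : ℤ)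

/-- The statistic `ε_l` of the polytope model (`l = 0` is the affine one). -/
def eps (n i m : ℕ) (a : Mat) (l : ℕ) : ℤ :=
  if l = 0 then
    (m : ℤ) - ∑ j ∈ Icc i n, (a 1 j : ℤ) - ∑ j ∈ Icc 2 n, (a j n : ℤ)
  else if l = i then (a i i : ℤ)
  else if i < l then
    ∑ j ∈ Icc (qPlus i a l) i, (a j l : ℤ)
      - ∑ j ∈ Icc (qPlus i a l + 1) i, (a j (l - 1) : ℤ)
  else
    ∑ j ∈ Icc i (qMinus n i a l), (a l j : ℤ)
      - ∑ j ∈ Icc i (qMinus n i a l - 1), (a (l + 1) j : ℤ)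

/-- Update one entry of a matrix. -/
def upd (a : Mat) (p q v : ℕ) : Mat :=
  fun p' q' => if p' = p ∧ q' = q then v else a p' q'

/-- The Kashiwara raising operator `ẽ_l` on `B^{i,m}` (`l = 0` affine). -/
def eOp (n i m : ℕ) (a : Mat) (l : ℕ) : Option Mat :=
  if eps n i m a l ≤ 0 then none
  else some (
    if l = 0 then upd a 1 n (a 1 n + 1)
    else if l = i then upd a i i (a i i - 1)
    else if i < l then
      upd (upd a (qPlus i a l) (l - 1) (a (qPlus i a l) (l - 1) + 1))
        (qPlus i a l) l (a (qPlus i a l) l - 1)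
    else
      upd (upd a l (qMinus n i a l) (a l (qMinus n i a l) - 1))
        (l + 1) (qMinus n i a l) (a (l + 1) (qMinus n i a l) + 1))

/-- The Kashiwara lowering operator `f̃_l` on `B^{i,m}` (`l = 0` affine). -/
def fOp (n i m : ℕ) (a : Mat) (l : ℕ) : Option Mat :=
  if phi n i m a l ≤ 0 then none
  else some (
    if l = 0 then upd a 1 n (a 1 n - 1)
    else if l = i then upd a i i (a i i + 1)
    else if i < l then
      upd (upd a (pPlus i a l) (l - 1) (a (pPlus i a l) (l - 1) - 1))
        (pPlus i a l) l (a (pPlus i a l) l + 1)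
    else
      upd (upd a l (pMinus n i a l) (a l (pMinus n i a l) + 1))
        (l + 1) (pMinus n i a l) (a (l + 1) (pMinus n i a l) - 1))

/-- `ẽ_l` on the tensor product `B^{r₁,s₁} ⊗ B^{r₂,s₂}`. -/
def eTen (n r₁ s₁ r₂ s₂ l : ℕ) (x : Mat × Mat) : Option (Mat × Mat) :=
  if phi n r₂ s₂ x.2 l < eps n r₁ s₁ x.1 l then
    (eOp n r₁ s₁ x.1 l).map fun a' => (a', x.2)
  else (eOp n r₂ s₂ x.2 l).map fun b' => (x.1, b')

/-- `f̃_l` on the tensor product `B^{r₁,s₁} ⊗ B^{r₂,s₂}`. -/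
def fTen (n r₁ s₁ r₂ s₂ l : ℕ) (x : Mat × Mat) : Option (Mat × Mat) :=
  if phi n r₂ s₂ x.2 l ≤ eps n r₁ s₁ x.1 l then
    (fOp n r₁ s₁ x.1 l).map fun a' => (a', x.2)
  else (fOp n r₂ s₂ x.2 l).map fun b' => (x.1, b')

/-- Classical highest weight element of the tensor product. -/
def IsHW (n r₁ s₁ r₂ s₂ : ℕ) (x : Mat × Mat) : Prop :=
  ∀ l, 1 ≤ l → l ≤ n → eTen n r₁ s₁ r₂ s₂ l x = none

/-- Cartan matrix of type `A_n`: `⟨α_r, α_j^∨⟩`. -/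
def cartan (r j : ℕ) : ℤ :=
  if r = j then 2 else if r + 1 = j ∨ j + 1 = r then -1 else 0

/-- The pairing `⟨wt(A), α_j^∨⟩` where `wt(A) = m ω_i - Σ a_{p,q} α_{p,q}`,
and `α_{p,q} = α_p + ⋯ + α_q`. -/
def wtCoord (n i m : ℕ) (a : Mat) (j : ℕ) : ℤ :=
  (if j = i then (m : ℤ) else 0)
    - ∑ p ∈ Icc 1 i, ∑ q ∈ Icc i n, (a p q : ℤ) * ∑ r ∈ Icc p q, cartan r j

/-- The matrix `b^Λ` with `(p,q)`-entry `c ((p+q) mod (n+1))` on the index range. -/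
def bOf (n i : ℕ) (c : ℕ → ℕ) : Mat :=
  fun p q => if 1 ≤ p ∧ p ≤ i ∧ i ≤ q ∧ q ≤ n then c ((p + q) % (n + 1)) else 0

lemma path_sum {n i : ℕ} {β : ℕ → ℕ × ℕ} (hβ : IsPath n i β) :
    ∀ t, 1 ≤ t → t ≤ n → (β t).1 + (β t).2 = t + i := by
  intro t h1 hn
  induction t, h1 using Nat.le_induction with
  | base => simp [hβ.1]
  | succ t ht ih =>
    have ih' := ih (by omega)
    rcases hβ.2.2 t ht (by omega) with h | h <;> rw [h] <;> simp <;> omega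

lemma path_mono {n i : ℕ} {β : ℕ → ℕ × ℕ} (hβ : IsPath n i β) :
    ∀ s t, 1 ≤ s → s ≤ t → t ≤ n → (β s).1 ≤ (β t).1 ∧ (β s).2 ≤ (β t).2 := by
  intro s t h1 hst hn
  induction t, hst using Nat.le_induction with
  | base => exact ⟨le_rfl, le_rfl⟩
  | succ t ht ih =>
    have ih' := ih (by omega)
    rcases hβ.2.2 t (by omega) (by omega) with h | h <;> rw [h] <;> simp <;> omega

/-- `f₀` (decrease `a_{1,n}`, defined when `a_{1,n} > 0`) and `e₀`
(increase `a_{1,n}`, defined when `ε₀(A) > 0`) map `B^{i,m}` to itself and are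
mutually inverse wherever defined. -/
theorem stmt2 (n i m : ℕ) (hi1 : 1 ≤ i) (hin : i ≤ n) (a : Mat)
    (ha : MemKR n i m a) :
    (0 < a 1 n → MemKR n i m (upd a 1 n (a 1 n - 1))) ∧
    (0 < eps n i m a 0 → MemKR n i m (upd a 1 n (a 1 n + 1))) ∧
    (0 < a 1 n →
      upd (upd a 1 n (a 1 n - 1)) 1 n (upd a 1 n (a 1 n - 1) 1 n + 1) = a) ∧
    (0 < eps n i m a 0 →
      upd (upd a 1 n (a 1 n + 1)) 1 n (upd a 1 n (a 1 n + 1) 1 n - 1) = a) := by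
  obtain ⟨hzero, hpathle⟩ := ha
  refine ⟨?_, ?_, ?_, ?_⟩
  · intro _
    refine ⟨fun p q h => ?_, fun β hβ => ?_⟩
    · by_cases hpq : p = 1 ∧ q = n
      · exact absurd ⟨by omega, by omega, by omega, by omega⟩ h
      · simp only [upd, if_neg hpq]; exact hzero p q h
    · calc ∑ s ∈ Icc 1 n, upd a 1 n (a 1 n - 1) (β s).1 (β s).2
          ≤ ∑ s ∈ Icc 1 n, a (β s).1 (β s).2 := by
            apply Finset.sum_le_sum
            intro s _
            simp only [upd]
            split
            · next h => rw [h.1, h.2]; omega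
            · exact le_rfl
        _ ≤ m := hpathle β hβ
  · intro heps
    refine ⟨fun p q h => ?_, fun β hβ => ?_⟩
    · by_cases hpq : p = 1 ∧ q = n
      · exact absurd ⟨by omega, by omega, by omega, by omega⟩ h
      · simp only [upd, if_neg hpq]; exact hzero p q h
    · by_cases hpass : ∃ s, 1 ≤ s ∧ s ≤ n ∧ β s = (1, n)
      · obtain ⟨s, hs1, hsn, hsv⟩ := hpass
        have hseq : s + 1 + i = n + 2 := by
          have := path_sum hβ s hs1 hsn
          rw [hsv] at this
          simp at this
          omega
        have hcol : ∀ t, 1 ≤ t → t ≤ s → β t = (1, t + i - 1) := by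
          intro t h1 h2
          have h3 := path_mono hβ t s h1 h2 hsn
          rw [hsv] at h3
          have h4 := path_mono hβ 1 t le_rfl h1 (by omega)
          rw [hβ.1] at h4
          have h5 := path_sum hβ t h1 (by omega)
          simp only at h3 h4
          exact Prod.ext (by omega) (by omega)
        have hrow : ∀ t, s ≤ t → t ≤ n → β t = (t + i - n, n) := by
          intro t h1 h2
          have h3 := path_mono hβ s t hs1 h1 h2
          rw [hsv] at h3
          have h4 := path_mono hβ t n (by omega) h2 le_rfl
          rw [hβ.2.1] at h4
          have h5 := path_sum hβ t (by omega) h2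
          simp only at h3 h4
          exact Prod.ext (by omega) (by omega)
        have hsplit : ∑ t ∈ Icc 1 n, upd a 1 n (a 1 n + 1) (β t).1 (β t).2
            = ∑ t ∈ Icc 1 s, upd a 1 n (a 1 n + 1) (β t).1 (β t).2
              + ∑ t ∈ Icc (s+1) n, upd a 1 n (a 1 n + 1) (β t).1 (β t).2 := by
          rw [show Finset.Icc 1 n = Finset.Ioc 0 n from Finset.Icc_add_one_left_eq_Ioc 0 n,
              show Finset.Icc 1 s = Finset.Ioc 0 s from Finset.Icc_add_one_left_eq_Ioc 0 s,
              show Finset.Icc (s+1) n = Finset.Ioc s n from Finset.Icc_add_one_left_eq_Ioc s n]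
          exact (Finset.sum_Ioc_consecutive _ (Nat.zero_le s) hsn).symm
        have h1sum : ∑ t ∈ Icc 1 s, upd a 1 n (a 1 n + 1) (β t).1 (β t).2
            = ∑ j ∈ Icc i n, upd a 1 n (a 1 n + 1) 1 j := by
          apply Finset.sum_nbij' (i := fun t => t + i - 1) (j := fun j => j + 1 - i)
          · intro t ht; simp only [Finset.mem_Icc] at *; omega
          · intro j hj; simp only [Finset.mem_Icc] at *; omega
          · intro t ht; simp only [Finset.mem_Icc] at ht; omega
          · intro j hj; simp only [Finset.mem_Icc] at hj; omega
          · intro t ht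
            simp only [Finset.mem_Icc] at ht
            rw [hcol t ht.1 ht.2]
        have h1val : ∑ j ∈ Icc i n, upd a 1 n (a 1 n + 1) 1 j
            = (∑ j ∈ Icc i n, a 1 j) + 1 := by
          have hnmem : n ∈ Finset.Icc i n := Finset.mem_Icc.mpr ⟨hin, le_rfl⟩
          rw [← Finset.sum_erase_add _ _ hnmem, ← Finset.sum_erase_add _ (fun j => a 1 j) hnmem]
          have herase : ∑ j ∈ (Icc i n).erase n, upd a 1 n (a 1 n + 1) 1 j
              = ∑ j ∈ (Icc i n).erase n, a 1 j := by
            refine Finset.sum_congr rfl fun j hj => ?_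
            have hne := Finset.ne_of_mem_erase hj
            simp [upd, hne]
          rw [herase]
          simp only [upd, and_true, if_true]
          omega
        have h2sum : ∑ t ∈ Icc (s+1) n, upd a 1 n (a 1 n + 1) (β t).1 (β t).2
            = ∑ p ∈ Icc 2 i, a p n := by
          apply Finset.sum_nbij' (i := fun t => t + i - n) (j := fun p => p + n - i)
          · intro t ht; simp only [Finset.mem_Icc] at *; omega
          · intro p hp; simp only [Finset.mem_Icc] at *; omega
          · intro t ht; simp only [Finset.mem_Icc] at ht; omega
          · intro p hp; simp only [Finset.mem_Icc] at hp; omega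
          · intro t ht
            simp only [Finset.mem_Icc] at ht
            rw [hrow t (by omega) ht.2]
            simp only [upd]
            rw [if_neg]
            intro h
            omega
        have h2le : ∑ p ∈ Icc 2 i, a p n ≤ ∑ p ∈ Icc 2 n, a p n :=
          Finset.sum_le_sum_of_subset (Finset.Icc_subset_Icc_right hin)
        rw [hsplit, h1sum, h1val, h2sum]
        unfold eps at heps
        rw [if_pos (rfl : (0:ℕ) = 0), ← Nat.cast_sum, ← Nat.cast_sum] at heps
        omega
      · push_neg at hpass
        have heq : ∑ t ∈ Icc 1 n, upd a 1 n (a 1 n + 1) (β t).1 (β t).2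
            = ∑ t ∈ Icc 1 n, a (β t).1 (β t).2 := by
          refine Finset.sum_congr rfl fun t ht => ?_
          simp only [Finset.mem_Icc] at ht
          have hne := hpass t ht.1 ht.2
          simp only [upd]
          rw [if_neg]
          intro h
          exact hne (Prod.ext h.1 h.2)
        rw [heq]
        exact hpathle β hβ
  · intro hpos
    funext p q
    by_cases hpq : p = 1 ∧ q = n
    · obtain ⟨rfl, rfl⟩ := hpq
      simp [upd]
      omega
    · simp [upd, hpq]
  · intro _
    funext p q
    by_cases hpq : p = 1 ∧ q = n
    · obtain ⟨rfl, rfl⟩ := hpq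
      simp [upd]
    · simp [upd, hpq]
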